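/- arXiv:2503.20762 — 2 statements merged into one kernel-verified Lean document; each statement's English description precedes it below -/
import Mathlib

section
/- Under the setting of the ASGO nonsmooth convergence theorem (convex f with minimizer W_*, updates V_t = V_{t-1} + G_t G_tᵀ, Λ_t = V_t^{1/2} + ε I_m, W_{t+1} = W_t - η Λ_t^{-1} G_t with η = D_op, and ‖W_t - W_*‖_op ≤ D_op, ‖W_t - W_*‖_F ≤ D_F almost surely), if in addition there is a symmetric positive definite Q ∈ R^{m×m} with E[G_t G_tᵀ] ⪯ Q² for every t, then there is an absolute constant C such that (1/T) Σ_{t=0}^{T-1} E[f(W_t)] - f(W_*) ≤ C ( ‖Q‖_* D_op / √T + ε D_F² / (D_op T) ). -/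
open Matrix MeasureTheory
open scoped Classical

/-- The positive semidefinite square root of a positive semidefinite real matrix
(junk value `0` if the matrix is not positive semidefinite). -/
noncomputable def psdSqrt {k : ℕ} (X : Matrix (Fin k) (Fin k) ℝ) : Matrix (Fin k) (Fin k) ℝ :=
  if h : X.PosSemidef then
    (h.1.eigenvectorUnitary : Matrix (Fin k) (Fin k) ℝ) *
      diagonal (Real.sqrt ∘ h.1.eigenvalues) *
      (star h.1.eigenvectorUnitary : Matrix (Fin k) (Fin k) ℝ)
  else 0

/-- The trace (nuclear) norm of a real matrix: the sum of its singular values,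
i.e. `tr((Aᵀ A)^{1/2})`. -/
noncomputable def nuclearNorm {m n : ℕ} (A : Matrix (Fin m) (Fin n) ℝ) : ℝ :=
  (psdSqrt (Aᵀ * A)).trace

/-- The spectral norm (largest singular value) of a real matrix, i.e. the operator norm
of the induced linear map between Euclidean spaces. -/
noncomputable def matSpectralNorm {m n : ℕ} (A : Matrix (Fin m) (Fin n) ℝ) : ℝ :=
  ‖LinearMap.toContinuousLinearMap (Matrix.toEuclideanLin (𝕜 := ℝ) A)‖

/-- The Frobenius norm of a real matrix. -/
noncomputable def frobeniusNorm {m n : ℕ} (A : Matrix (Fin m) (Fin n) ℝ) : ℝ :=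
  Real.sqrt (∑ i, ∑ j, (A i j) ^ 2)

namespace ASGO
variable {k m n : ℕ}

lemma conjT_eq_transpose (A : Matrix (Fin m) (Fin n) ℝ) : Aᴴ = Aᵀ := by
  ext i j; simp [Matrix.conjTranspose_apply]

lemma transpose_eq_self_of_herm {A : Matrix (Fin k) (Fin k) ℝ} (h : A.IsHermitian) :
    Aᵀ = A := by
  rw [← conjT_eq_transpose]; exact h

lemma posSemidef_mul_transpose_self (A : Matrix (Fin m) (Fin n) ℝ) :
    (A * Aᵀ).PosSemidef := by
  rw [← conjT_eq_transpose]; exact Matrix.posSemidef_self_mul_conjTranspose A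

open scoped MatrixOrder in
lemma psdSqrt_eq_sqrt {X : Matrix (Fin k) (Fin k) ℝ} (h : X.PosSemidef) :
    psdSqrt X = CFC.sqrt X := by
  rw [CFC.sqrt_eq_real_sqrt X h.nonneg, cfcₙ_eq_cfc, h.1.cfc_eq, psdSqrt, dif_pos h]
  rfl

open scoped MatrixOrder in
lemma psdSqrt_posSemidef {X : Matrix (Fin k) (Fin k) ℝ} (h : X.PosSemidef) :
    (psdSqrt X).PosSemidef := by
  rw [psdSqrt_eq_sqrt h]; exact (CFC.sqrt_nonneg X).posSemidef

open scoped MatrixOrder in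
lemma psdSqrt_mul_self {X : Matrix (Fin k) (Fin k) ℝ} (h : X.PosSemidef) :
    psdSqrt X * psdSqrt X = X := by
  rw [psdSqrt_eq_sqrt h]; exact CFC.sqrt_mul_sqrt_self X h.nonneg

open scoped MatrixOrder in
lemma psdSqrt_eq {X S : Matrix (Fin k) (Fin k) ℝ} (hX : X.PosSemidef) (hS : S.PosSemidef)
    (h : S * S = X) : psdSqrt X = S := by
  rw [psdSqrt_eq_sqrt hX]
  exact CFC.sqrt_unique h hS.nonneg

lemma psdSqrt_sq {S : Matrix (Fin k) (Fin k) ℝ} (hS : S.PosSemidef) :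
    psdSqrt (S * S) = S :=
  psdSqrt_eq (by rw [← pow_two]; exact hS.pow 2) hS rfl

lemma psd_trace_nonneg {A : Matrix (Fin k) (Fin k) ℝ} (h : A.PosSemidef) : 0 ≤ A.trace := by
  rw [Matrix.trace]
  refine Finset.sum_nonneg fun i _ => ?_
  have := h.dotProduct_mulVec_nonneg (Pi.single i 1)
  simpa [dotProduct, Matrix.mulVec, Pi.single_apply, Finset.sum_ite_eq',
    Matrix.diag] using this

lemma smul_posSemidef {A : Matrix (Fin k) (Fin k) ℝ} (h : A.PosSemidef) {c : ℝ}
    (hc : 0 ≤ c) : (c • A).PosSemidef := by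
  refine Matrix.PosSemidef.of_dotProduct_mulVec_nonneg ?_ fun x => ?_
  · unfold Matrix.IsHermitian
    rw [conjT_eq_transpose, Matrix.transpose_smul, transpose_eq_self_of_herm h.1]
  · rw [Matrix.smul_mulVec, dotProduct_smul]
    exact mul_nonneg hc (h.dotProduct_mulVec_nonneg x)

lemma trace_mul_psd_nonneg {A B : Matrix (Fin k) (Fin k) ℝ} (hA : A.PosSemidef)
    (hB : B.PosSemidef) : 0 ≤ (A * B).trace := by
  have h2 : (psdSqrt A * B * psdSqrt A).PosSemidef := by
    have := hB.mul_mul_conjTranspose_same (psdSqrt A)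
    rwa [conjT_eq_transpose, transpose_eq_self_of_herm (psdSqrt_posSemidef hA).1] at this
  have h3 : (A * B).trace = (psdSqrt A * B * psdSqrt A).trace := by
    conv_lhs => rw [← psdSqrt_mul_self hA, Matrix.mul_assoc, Matrix.trace_mul_comm]
  rw [h3]
  exact psd_trace_nonneg h2

lemma trace_mul_mono {A B C : Matrix (Fin k) (Fin k) ℝ} (hC : C.PosSemidef)
    (hAB : (B - A).PosSemidef) : (C * A).trace ≤ (C * B).trace := by
  have := trace_mul_psd_nonneg hC hAB
  rw [Matrix.mul_sub, Matrix.trace_sub] at this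
  linarith


lemma smul_posDef {A : Matrix (Fin k) (Fin k) ℝ} (h : A.PosDef) {c : ℝ}
    (hc : 0 < c) : (c • A).PosDef := by
  refine Matrix.PosDef.of_dotProduct_mulVec_pos ?_ fun x hx => ?_
  · unfold Matrix.IsHermitian
    rw [conjT_eq_transpose, Matrix.transpose_smul, transpose_eq_self_of_herm h.1]
  · rw [Matrix.smul_mulVec, dotProduct_smul, smul_eq_mul]
    exact mul_pos hc (h.dotProduct_mulVec_pos hx)

lemma psd_conj {A : Matrix (Fin m) (Fin m) ℝ} (hA : A.PosSemidef)
    (D : Matrix (Fin m) (Fin n) ℝ) : (Dᵀ * A * D).PosSemidef := by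
  have := hA.mul_mul_conjTranspose_same Dᵀ
  rwa [conjT_eq_transpose, Matrix.transpose_transpose] at this

lemma master {M P : Matrix (Fin k) (Fin k) ℝ} (hM : M.PosDef) (hP : P.IsHermitian) :
    2 * P.trace - M.trace ≤ (M⁻¹ * (P * P)).trace := by
  have hMdet : IsUnit M.det := hM.det_pos.ne'.isUnit
  have h1 : M * M⁻¹ = 1 := Matrix.mul_nonsing_inv M hMdet
  have h2 : M⁻¹ * M = 1 := Matrix.nonsing_inv_mul M hMdet
  have hpsd : ((P - M) * M⁻¹ * (P - M)).PosSemidef := by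
    have := hM.inv.posSemidef.mul_mul_conjTranspose_same (P - M)
    rwa [conjT_eq_transpose, transpose_eq_self_of_herm (hP.sub hM.isHermitian)] at this
  have h0 := psd_trace_nonneg hpsd
  have hexp : (P - M) * M⁻¹ * (P - M) = P * (M⁻¹ * P) - P - P + M := by
    have e1 : M * (M⁻¹ * P) = P := by rw [← Matrix.mul_assoc, h1, Matrix.one_mul]
    have e2 : P * (M⁻¹ * M) = P := by rw [h2, Matrix.mul_one]
    simp only [Matrix.sub_mul, Matrix.mul_sub, Matrix.mul_assoc, h2, Matrix.mul_one, e1]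
    abel
  have htr : (P * (M⁻¹ * P)).trace = (M⁻¹ * (P * P)).trace := by
    rw [Matrix.trace_mul_comm, Matrix.mul_assoc]
  rw [hexp] at h0
  rw [Matrix.trace_add, Matrix.trace_sub, Matrix.trace_sub, htr] at h0
  linarith

lemma psdSqrt_mono {A B : Matrix (Fin k) (Fin k) ℝ} (hA : A.PosSemidef) (hB : B.PosSemidef)
    (hAB : (B - A).PosSemidef) : (psdSqrt B - psdSqrt A).PosSemidef := by
  set X := psdSqrt B with hXdef
  set Y := psdSqrt A with hYdef
  have hX := psdSqrt_posSemidef hB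
  have hY := psdSqrt_posSemidef hA
  have hH : (X - Y).IsHermitian := hX.1.sub hY.1
  apply hH.posSemidef_iff_eigenvalues_nonneg.mpr
  intro i
  by_contra hneg
  push_neg at hneg
  rw [Pi.zero_apply] at hneg
  set lam := hH.eigenvalues i with hlam
  set v : Fin k → ℝ := ⇑(hH.eigenvectorBasis i) with hvdef
  have hv : (X - Y) *ᵥ v = lam • v := hH.mulVec_eigenvectorBasis i
  have hvne : v ≠ 0 := by
    intro h0
    refine hH.eigenvectorBasis.orthonormal.ne_zero i ?_
    ext j
    exact congrFun h0 j
  have hq : (0:ℝ) ≤ v ⬝ᵥ ((B - A) *ᵥ v) := by simpa using hAB.dotProduct_mulVec_nonneg v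
  have hXX : X * X = B := psdSqrt_mul_self hB
  have hYY : Y * Y = A := psdSqrt_mul_self hA
  have hBA : B - A = X * (X - Y) + (X - Y) * Y := by
    rw [Matrix.mul_sub, Matrix.sub_mul, hXX, hYY]
    abel
  have e1 : v ⬝ᵥ ((X * (X - Y)) *ᵥ v) = lam * (v ⬝ᵥ (X *ᵥ v)) := by
    rw [← Matrix.mulVec_mulVec, hv, Matrix.mulVec_smul, dotProduct_smul, smul_eq_mul]
  have e2 : v ⬝ᵥ (((X - Y) * Y) *ᵥ v) = lam * (v ⬝ᵥ (Y *ᵥ v)) := by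
    rw [← Matrix.mulVec_mulVec, Matrix.dotProduct_mulVec]
    have hsymm : v ᵥ* (X - Y) = lam • v := by
      rw [← Matrix.mulVec_transpose, transpose_eq_self_of_herm hH, hv]
    rw [hsymm, smul_dotProduct, smul_eq_mul]
  have hsum : 0 ≤ lam * (v ⬝ᵥ (X *ᵥ v) + v ⬝ᵥ (Y *ᵥ v)) := by
    have : v ⬝ᵥ ((B - A) *ᵥ v) = lam * (v ⬝ᵥ (X *ᵥ v) + v ⬝ᵥ (Y *ᵥ v)) := by
      rw [hBA, Matrix.add_mulVec, dotProduct_add, e1, e2, mul_add]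
    linarith [hq, this.le, this.ge]
  have ha : 0 ≤ v ⬝ᵥ (X *ᵥ v) := by simpa using hX.dotProduct_mulVec_nonneg v
  have hb : 0 ≤ v ⬝ᵥ (Y *ᵥ v) := by simpa using hY.dotProduct_mulVec_nonneg v
  have hab : v ⬝ᵥ (X *ᵥ v) = 0 ∧ v ⬝ᵥ (Y *ᵥ v) = 0 := by
    constructor <;> nlinarith [hsum, ha, hb, hneg]
  have hXv : X *ᵥ v = 0 := by
    refine (hX.dotProduct_mulVec_zero_iff v).1 ?_
    simpa using hab.1
  have hYv : Y *ᵥ v = 0 := by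
    refine (hY.dotProduct_mulVec_zero_iff v).1 ?_
    simpa using hab.2
  have hlv : lam • v = 0 := by
    rw [← hv, Matrix.sub_mulVec, hXv, hYv, sub_zero]
  rcases smul_eq_zero.mp hlv with h | h
  · exact absurd h (by linarith [hneg])
  · exact hvne h

lemma dotProduct_self_eq_normSq (u : Fin n → ℝ) :
    u ⬝ᵥ u = ‖(WithLp.equiv 2 (Fin n → ℝ)).symm u‖ ^ 2 := by
  rw [EuclideanSpace.norm_eq, Real.sq_sqrt (by positivity)]
  simp [dotProduct, Real.norm_eq_abs, sq_abs, pow_two]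

lemma mulVec_le_matSpectralNorm (D : Matrix (Fin m) (Fin n) ℝ) (u : Fin n → ℝ) :
    ‖(WithLp.equiv 2 (Fin m → ℝ)).symm (D *ᵥ u)‖ ≤
      matSpectralNorm D * ‖(WithLp.equiv 2 (Fin n → ℝ)).symm u‖ := by
  have := (LinearMap.toContinuousLinearMap
    (Matrix.toEuclideanLin (𝕜 := ℝ) D)).le_opNorm ((WithLp.equiv 2 (Fin n → ℝ)).symm u)
  simpa [matSpectralNorm, Matrix.toEuclideanLin_apply] using this

lemma dot_mulVec_inner (D : Matrix (Fin m) (Fin n) ℝ) (x : Fin m → ℝ) (u : Fin n → ℝ) :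
    x ⬝ᵥ (D *ᵥ u) = (inner ℝ ((WithLp.equiv 2 (Fin m → ℝ)).symm x)
      ((WithLp.equiv 2 (Fin m → ℝ)).symm (D *ᵥ u)) : ℝ) := by
  simp [PiLp.inner_apply, RCLike.inner_apply, dotProduct, mul_comm]

lemma mulVec_transpose_sq_le (D : Matrix (Fin m) (Fin n) ℝ) (x : Fin m → ℝ) :
    (Dᵀ *ᵥ x) ⬝ᵥ (Dᵀ *ᵥ x) ≤ matSpectralNorm D ^ 2 * (x ⬝ᵥ x) := by
  set u := Dᵀ *ᵥ x with hu
  have key : u ⬝ᵥ u = x ⬝ᵥ (D *ᵥ u) := by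
    rw [Matrix.dotProduct_mulVec x D u, ← Matrix.mulVec_transpose]
  set a := ‖(WithLp.equiv 2 (Fin n → ℝ)).symm u‖ with ha
  set b := ‖(WithLp.equiv 2 (Fin m → ℝ)).symm x‖ with hb
  have ha0 : 0 ≤ a := norm_nonneg _
  have hb0 : 0 ≤ b := norm_nonneg _
  have hsn : 0 ≤ matSpectralNorm D := norm_nonneg _
  have h1 : u ⬝ᵥ u = a ^ 2 := dotProduct_self_eq_normSq u
  have h2 : x ⬝ᵥ x = b ^ 2 := dotProduct_self_eq_normSq x
  have h3 : x ⬝ᵥ (D *ᵥ u) ≤ b * (matSpectralNorm D * a) := by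
    rw [dot_mulVec_inner]
    refine le_trans (real_inner_le_norm _ _) ?_
    exact mul_le_mul_of_nonneg_left (mulVec_le_matSpectralNorm D u) hb0
  have h4 : a ^ 2 ≤ b * (matSpectralNorm D * a) := by rw [← h1, key]; exact h3
  rw [h1, h2]
  have hsb : 0 ≤ matSpectralNorm D * b := mul_nonneg hsn hb0
  have h5 : a ≤ matSpectralNorm D * b := by
    rcases eq_or_lt_of_le ha0 with h0 | h0
    · rw [← h0]; exact hsb
    · nlinarith [h4]
  calc a ^ 2 ≤ (matSpectralNorm D * b) ^ 2 := by nlinarith [h5, ha0]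
    _ = matSpectralNorm D ^ 2 * b ^ 2 := by ring

lemma mul_transpose_loewner (D : Matrix (Fin m) (Fin n) ℝ) {c : ℝ} (hc : 0 ≤ c)
    (h : matSpectralNorm D ≤ c) : (c ^ 2 • (1 : Matrix (Fin m) (Fin m) ℝ) - D * Dᵀ).PosSemidef := by
  refine Matrix.PosSemidef.of_dotProduct_mulVec_nonneg ?_ fun x => ?_
  · show _ = _
    rw [conjT_eq_transpose, Matrix.transpose_sub, Matrix.transpose_smul, Matrix.transpose_one,
      Matrix.transpose_mul, Matrix.transpose_transpose]
  · have hsx : star x = x := by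
      funext j; simp
    rw [hsx, Matrix.sub_mulVec, dotProduct_sub, Matrix.smul_mulVec,
      Matrix.one_mulVec, dotProduct_smul, smul_eq_mul]
    have e1 : x ⬝ᵥ ((D * Dᵀ) *ᵥ x) = (Dᵀ *ᵥ x) ⬝ᵥ (Dᵀ *ᵥ x) := by
      rw [← Matrix.mulVec_mulVec, Matrix.dotProduct_mulVec x D, ← Matrix.mulVec_transpose]
    rw [e1]
    have hsn : 0 ≤ matSpectralNorm D := norm_nonneg _
    have h2 : matSpectralNorm D ^ 2 ≤ c ^ 2 := by nlinarith [h, hsn]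
    have h3 := mulVec_transpose_sq_le D x
    have h4 : (0:ℝ) ≤ x ⬝ᵥ x := by
      rw [dotProduct_self_eq_normSq x]; positivity
    nlinarith [h3, h4, h2]


lemma trace_quad_le {D : Matrix (Fin m) (Fin n) ℝ} {M : Matrix (Fin m) (Fin m) ℝ}
    (hM : M.PosSemidef) {c : ℝ} (hc : 0 ≤ c) (hD : matSpectralNorm D ≤ c) :
    (Dᵀ * M * D).trace ≤ c ^ 2 * M.trace := by
  have e1 : (Dᵀ * M * D).trace = (M * (D * Dᵀ)).trace := by
    rw [Matrix.trace_mul_comm (Dᵀ * M) D, ← Matrix.mul_assoc, Matrix.trace_mul_comm (D * Dᵀ) M]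
  rw [e1]
  have h2 := trace_mul_mono hM (mul_transpose_loewner D hc hD)
  have e3 : M * (c ^ 2 • (1 : Matrix (Fin m) (Fin m) ℝ)) = c ^ 2 • M := by
    rw [Matrix.mul_smul, Matrix.mul_one]
  rw [e3, Matrix.trace_smul, smul_eq_mul] at h2
  exact h2

lemma frobenius_sq (D : Matrix (Fin m) (Fin n) ℝ) :
    frobeniusNorm D ^ 2 = ∑ i, ∑ j, D i j ^ 2 := by
  rw [frobeniusNorm, Real.sq_sqrt]
  positivity

lemma entry_abs_le_frobenius (D : Matrix (Fin m) (Fin n) ℝ) (i : Fin m) (j : Fin n) :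
    |D i j| ≤ frobeniusNorm D := by
  rw [← Real.sqrt_sq_eq_abs, frobeniusNorm]
  apply Real.sqrt_le_sqrt
  calc D i j ^ 2 ≤ ∑ j', D i j' ^ 2 :=
        Finset.single_le_sum (fun j' _ => sq_nonneg (D i j')) (Finset.mem_univ j)
    _ ≤ ∑ i', ∑ j', D i' j' ^ 2 :=
        Finset.single_le_sum (f := fun i' => ∑ j', D i' j' ^ 2)
          (fun i' _ => Finset.sum_nonneg fun j' _ => sq_nonneg _) (Finset.mem_univ i)

lemma frobeniusNorm_nonneg (D : Matrix (Fin m) (Fin n) ℝ) : 0 ≤ frobeniusNorm D :=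
  Real.sqrt_nonneg _

lemma trace_transpose_mul_self (D : Matrix (Fin m) (Fin n) ℝ) :
    (Dᵀ * D).trace = frobeniusNorm D ^ 2 := by
  rw [frobenius_sq, Matrix.trace]
  rw [Finset.sum_comm]
  apply Finset.sum_congr rfl
  intro j _
  simp [Matrix.diag, Matrix.mul_apply, pow_two]

lemma trace_transpose_mul (A B : Matrix (Fin m) (Fin n) ℝ) :
    (Aᵀ * B).trace = ∑ i, ∑ j, A i j * B i j := by
  rw [Matrix.trace, Finset.sum_comm]
  apply Finset.sum_congr rfl
  intro j _
  simp [Matrix.diag, Matrix.mul_apply]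

lemma nuclearNorm_of_posSemidef {S : Matrix (Fin k) (Fin k) ℝ} (hS : S.PosSemidef) :
    nuclearNorm S = S.trace := by
  rw [nuclearNorm, transpose_eq_self_of_herm hS.1, psdSqrt_sq hS]

lemma trace_psdSqrt_le_variational {A M : Matrix (Fin k) (Fin k) ℝ} (hA : A.PosSemidef)
    (hM : M.PosDef) :
    (psdSqrt A).trace ≤ ((M⁻¹ * A).trace + M.trace) / 2 := by
  have h := master hM (psdSqrt_posSemidef hA).1
  rw [psdSqrt_mul_self hA] at h
  linarith

lemma sum_posSemidef {ι : Type*} (s : Finset ι) (f : ι → Matrix (Fin k) (Fin k) ℝ)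
    (h : ∀ i ∈ s, (f i).PosSemidef) : (∑ i ∈ s, f i).PosSemidef := by
  classical
  induction s using Finset.induction_on with
  | empty => simpa using Matrix.PosSemidef.zero
  | insert a s' hnot ih =>
    rw [Finset.sum_insert hnot]
    exact (h a (Finset.mem_insert_self a s')).add
      (ih fun i hi => h i (Finset.mem_insert_of_mem hi))

lemma smul_one_posDef {c : ℝ} (hc : 0 < c) : (c • (1 : Matrix (Fin k) (Fin k) ℝ)).PosDef := by
  refine Matrix.PosDef.of_dotProduct_mulVec_pos ?_ fun x hx => ?_
  · show _ = _
    rw [conjT_eq_transpose, Matrix.transpose_smul, Matrix.transpose_one]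
  · have hsx : star x = x := by funext j; simp
    rw [hsx, Matrix.smul_mulVec, Matrix.one_mulVec, dotProduct_smul, smul_eq_mul]
    apply mul_pos hc
    rw [dotProduct_self_eq_normSq x]
    have hx' : (WithLp.equiv 2 (Fin k → ℝ)).symm x ≠ 0 := by
      intro h0
      apply hx
      funext j
      exact congrFun (congrArg (WithLp.equiv 2 (Fin k → ℝ)) h0) j
    exact pow_pos (norm_pos_iff.mpr hx') 2

lemma pathwise {m n T : ℕ} (hT : 0 < T) {ε η DF : ℝ} (hε : 0 < ε) (hη : 0 < η)
    (G D : ℕ → Matrix (Fin m) (Fin n) ℝ) (Λ : ℕ → Matrix (Fin m) (Fin m) ℝ)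
    (hΛ : ∀ t, Λ t = psdSqrt (∑ s ∈ Finset.range (t + 1), G s * (G s)ᵀ) + ε • 1)
    (hDrec : ∀ t, D (t + 1) = D t - η • ((Λ t)⁻¹ * G t))
    (hop : ∀ t, t < T → matSpectralNorm (D t) ≤ η)
    (hfr : ∀ t, t < T → frobeniusNorm (D t) ≤ DF) :
    ∑ t ∈ Finset.range T, ((G t)ᵀ * D t).trace ≤
      3 / 2 * η * (psdSqrt (∑ s ∈ Finset.range T, G s * (G s)ᵀ)).trace + ε * DF ^ 2 / (2 * η) := by
  obtain ⟨N, rfl⟩ : ∃ N, T = N + 1 := ⟨T - 1, (Nat.succ_pred_eq_of_pos hT).symm⟩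
  set V : ℕ → Matrix (Fin m) (Fin m) ℝ :=
    fun t => ∑ s ∈ Finset.range (t + 1), G s * (G s)ᵀ with hVdef
  set S : ℕ → Matrix (Fin m) (Fin m) ℝ := fun t => psdSqrt (V t) with hSdef
  have hVpsd : ∀ t, (V t).PosSemidef := fun t =>
    sum_posSemidef _ _ fun s _ => posSemidef_mul_transpose_self (G s)
  have hSpsd : ∀ t, (S t).PosSemidef := fun t => psdSqrt_posSemidef (hVpsd t)
  have hSS : ∀ t, S t * S t = V t := fun t => psdSqrt_mul_self (hVpsd t)
  have hVstep : ∀ t, V (t + 1) = V t + G (t + 1) * (G (t + 1))ᵀ := fun t =>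
    Finset.sum_range_succ _ _
  have hSmono : ∀ t, (S (t + 1) - S t).PosSemidef := fun t => by
    refine psdSqrt_mono (hVpsd t) (hVpsd (t + 1)) ?_
    rw [hVstep t, add_sub_cancel_left]
    exact posSemidef_mul_transpose_self (G (t + 1))
  have hΛdef : ∀ t, Λ t = S t + ε • 1 := hΛ
  have hΛpd : ∀ t, (Λ t).PosDef := fun t => by
    rw [hΛdef t]; exact Matrix.PosDef.posSemidef_add (hSpsd t) (smul_one_posDef hε)
  have hΛherm : ∀ t, (Λ t)ᵀ = Λ t := fun t => transpose_eq_self_of_herm (hΛpd t).1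
  have hΛdet : ∀ t, IsUnit (Λ t).det := fun t => (hΛpd t).det_pos.ne'.isUnit
  have hinv1 : ∀ t, Λ t * (Λ t)⁻¹ = 1 := fun t => Matrix.mul_nonsing_inv _ (hΛdet t)
  have hinv2 : ∀ t, (Λ t)⁻¹ * Λ t = 1 := fun t => Matrix.nonsing_inv_mul _ (hΛdet t)
  have hinvT : ∀ t, ((Λ t)⁻¹)ᵀ = (Λ t)⁻¹ := fun t => by
    rw [Matrix.transpose_nonsing_inv, hΛherm t]
  -- step identity
  set φ : ℕ → ℝ := fun t => ((D t)ᵀ * Λ t * D t).trace with hφdef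
  set ψ : ℕ → ℝ := fun t => ((D (t + 1))ᵀ * Λ t * D (t + 1)).trace with hψdef
  set q : ℕ → ℝ := fun t => ((G t)ᵀ * ((Λ t)⁻¹ * G t)).trace with hqdef
  have key : ∀ t, 2 * η * ((G t)ᵀ * D t).trace = φ t - ψ t + η ^ 2 * q t := by
    intro t
    have eΛG : Λ t * ((Λ t)⁻¹ * G t) = G t := by
      rw [← Matrix.mul_assoc, hinv1 t, Matrix.one_mul]
    have eΛinv : ∀ X : Matrix (Fin m) (Fin n) ℝ, (Λ t)⁻¹ * (Λ t * X) = X := fun X => by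
      rw [← Matrix.mul_assoc, hinv2 t, Matrix.one_mul]
    have hmat : (D (t + 1))ᵀ * Λ t * D (t + 1)
        = (D t)ᵀ * Λ t * D t - η • ((D t)ᵀ * G t) - η • ((G t)ᵀ * ((Λ t)⁻¹ * (Λ t * D t)))
          + (η * η) • ((G t)ᵀ * ((Λ t)⁻¹ * G t)) := by
      rw [hDrec t, Matrix.transpose_sub, Matrix.transpose_smul, Matrix.transpose_mul, hinvT t]
      simp only [Matrix.sub_mul, Matrix.mul_sub, Matrix.smul_mul, Matrix.mul_smul, smul_smul,
        smul_add, smul_sub, Matrix.mul_assoc, eΛG]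
      module
    have htr1 : ((D t)ᵀ * G t).trace = ((G t)ᵀ * D t).trace := by
      rw [← Matrix.trace_transpose ((D t)ᵀ * G t), Matrix.transpose_mul,
        Matrix.transpose_transpose]
    have := congrArg Matrix.trace hmat
    rw [Matrix.trace_add, Matrix.trace_sub, Matrix.trace_sub, Matrix.trace_smul,
      Matrix.trace_smul, Matrix.trace_smul, eΛinv (D t), htr1] at this
    simp only [smul_eq_mul] at this
    simp only [hφdef, hψdef, hqdef]
    rw [this]
    ring
  -- second-order sum bound
  set Λ' : ℕ → Matrix (Fin m) (Fin m) ℝ :=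
    fun t => Nat.casesOn t (ε • 1) (fun s => Λ s) with hΛ'def
  set c : ℕ → ℝ := fun t => (Λ' t).trace with hcdef
  have hΛ'psd : ∀ t, (Λ' t).PosSemidef := by
    intro t
    cases t with
    | zero => exact (smul_one_posDef hε).posSemidef
    | succ s => exact (hΛpd s).posSemidef
  have hq_le : ∀ t, q t ≤ 2 * (c (t + 1) - c t) := by
    intro t
    have hq_eq : q t = ((Λ t)⁻¹ * (G t * (G t)ᵀ)).trace := by
      rw [hqdef]
      simp only []
      rw [Matrix.trace_mul_comm, Matrix.mul_assoc]
    have hsq_psd : (Λ t * Λ t - Λ' t * Λ' t - G t * (G t)ᵀ).PosSemidef := by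
      have hexp : Λ t * Λ t = V t + (2 * ε) • S t + (ε * ε) • 1 := by
        rw [hΛdef t]
        simp only [Matrix.add_mul, Matrix.mul_add, Matrix.smul_mul, Matrix.mul_smul, smul_smul,
          Matrix.one_mul, Matrix.mul_one, hSS t]
        module
      cases t with
      | zero =>
        have hΛ'0 : Λ' 0 * Λ' 0 = (ε * ε) • (1 : Matrix (Fin m) (Fin m) ℝ) := by
          show (ε • 1) * (ε • 1) = _
          rw [Matrix.smul_mul, Matrix.mul_smul, smul_smul, Matrix.one_mul]
        have hG0 : G 0 * (G 0)ᵀ = V 0 := by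
          rw [hVdef]; simp [Finset.sum_range_one]
        rw [hexp, hΛ'0, hG0]
        have : V 0 + (2 * ε) • S 0 + (ε * ε) • (1 : Matrix (Fin m) (Fin m) ℝ)
            - (ε * ε) • 1 - V 0 = (2 * ε) • S 0 := by abel
        rw [this]
        exact smul_posSemidef (hSpsd 0) (by linarith)
      | succ s =>
        have hexp' : Λ s * Λ s = V s + (2 * ε) • S s + (ε * ε) • 1 := by
          rw [hΛdef s]
          simp only [Matrix.add_mul, Matrix.mul_add, Matrix.smul_mul, Matrix.mul_smul, smul_smul,
            Matrix.one_mul, Matrix.mul_one, hSS s]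
          module
        have hGs : G (s + 1) * (G (s + 1))ᵀ = V (s + 1) - V s := by
          rw [hVstep s]; abel
        show (Λ (s+1) * Λ (s+1) - Λ s * Λ s - G (s+1) * (G (s+1))ᵀ).PosSemidef
        rw [hexp, hexp', hGs]
        have : V (s+1) + (2 * ε) • S (s+1) + (ε * ε) • (1 : Matrix (Fin m) (Fin m) ℝ)
            - (V s + (2 * ε) • S s + (ε * ε) • 1) - (V (s+1) - V s)
            = (2 * ε) • (S (s+1) - S s) := by
          rw [smul_sub]; abel
        rw [this]
        exact smul_posSemidef (hSmono s) (by linarith)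
    have h1 : q t ≤ ((Λ t)⁻¹ * (Λ t * Λ t - Λ' t * Λ' t)).trace := by
      rw [hq_eq]
      refine trace_mul_mono (hΛpd t).inv.posSemidef ?_
      exact hsq_psd
    have h2 : ((Λ t)⁻¹ * (Λ t * Λ t - Λ' t * Λ' t)).trace
        = (Λ t).trace - ((Λ t)⁻¹ * (Λ' t * Λ' t)).trace := by
      rw [Matrix.mul_sub, Matrix.trace_sub, ← Matrix.mul_assoc, hinv2 t, Matrix.one_mul]
    have h3 := master (hΛpd t) (hΛ'psd t).1
    have hct : c (t + 1) = (Λ t).trace := rfl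
    have hct' : c t = (Λ' t).trace := rfl
    rw [hct, hct']
    rw [h2] at h1
    linarith
  -- first-order (telescoping) bound
  have hψ_nonneg : ∀ t, 0 ≤ ψ t := fun t =>
    psd_trace_nonneg (psd_conj (hΛpd t).posSemidef (D (t + 1)))
  have hΛsub : ∀ t, Λ (t + 1) - Λ t = S (t + 1) - S t := fun t => by
    rw [hΛdef (t + 1), hΛdef t]; abel
  have hstep : ∀ t, t < N → φ (t + 1) - ψ t ≤ η ^ 2 * (S (t + 1)).trace - η ^ 2 * (S t).trace := by
    intro t ht
    have e1 : φ (t + 1) - ψ t = ((D (t + 1))ᵀ * (S (t + 1) - S t) * (D (t + 1))).trace := by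
      show ((D (t+1))ᵀ * Λ (t+1) * D (t+1)).trace - ((D (t+1))ᵀ * Λ t * D (t+1)).trace = _
      rw [← Matrix.trace_sub, ← Matrix.sub_mul, ← Matrix.mul_sub, hΛsub t]
    rw [e1]
    have h2 := trace_quad_le (D := D (t + 1)) (hSmono t) hη.le (hop (t + 1) (by omega))
    rw [Matrix.trace_sub] at h2
    linarith
  have hφ0 : φ 0 ≤ η ^ 2 * (S 0).trace + ε * DF ^ 2 := by
    have e1 : (D 0)ᵀ * Λ 0 * D 0 = (D 0)ᵀ * S 0 * D 0 + ε • ((D 0)ᵀ * D 0) := by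
      rw [hΛdef 0, Matrix.mul_add, Matrix.add_mul, Matrix.mul_smul, Matrix.mul_one,
        Matrix.smul_mul]
    have e2 : φ 0 = ((D 0)ᵀ * S 0 * D 0).trace + ε * ((D 0)ᵀ * D 0).trace := by
      show ((D 0)ᵀ * Λ 0 * D 0).trace = _
      rw [e1, Matrix.trace_add, Matrix.trace_smul, smul_eq_mul]
    have h3 := trace_quad_le (D := D 0) (hSpsd 0) hη.le (hop 0 (by omega))
    have h4 : ((D 0)ᵀ * D 0).trace ≤ DF ^ 2 := by
      rw [trace_transpose_mul_self]
      have := hfr 0 (by omega)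
      have h0 := frobeniusNorm_nonneg (D 0)
      nlinarith
    rw [e2]
    nlinarith [hε.le]
  have hsumA : ∑ t ∈ Finset.range (N + 1), (φ t - ψ t)
      ≤ η ^ 2 * (S N).trace + ε * DF ^ 2 := by
    have e1 : ∑ t ∈ Finset.range (N + 1), (φ t - ψ t)
        = φ 0 - ψ N + ∑ t ∈ Finset.range N, (φ (t + 1) - ψ t) := by
      rw [Finset.sum_sub_distrib, Finset.sum_range_succ' φ N, Finset.sum_range_succ ψ N,
        Finset.sum_sub_distrib]
      ring
    rw [e1]
    have h2 : ∑ t ∈ Finset.range N, (φ (t + 1) - ψ t)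
        ≤ ∑ t ∈ Finset.range N, (η ^ 2 * (S (t + 1)).trace - η ^ 2 * (S t).trace) :=
      Finset.sum_le_sum fun t ht => hstep t (Finset.mem_range.mp ht)
    have h3 : ∑ t ∈ Finset.range N, (η ^ 2 * (S (t + 1)).trace - η ^ 2 * (S t).trace)
        = η ^ 2 * (S N).trace - η ^ 2 * (S 0).trace :=
      Finset.sum_range_sub (fun t => η ^ 2 * (S t).trace) N
    have h4 := hψ_nonneg N
    rw [h3] at h2
    linarith
  -- combine
  have hsumQ : ∑ t ∈ Finset.range (N + 1), q t ≤ 2 * (S N).trace := by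
    have h1 : ∑ t ∈ Finset.range (N + 1), q t
        ≤ ∑ t ∈ Finset.range (N + 1), (2 * (c (t + 1) - c t)) :=
      Finset.sum_le_sum fun t _ => hq_le t
    have h2 : ∑ t ∈ Finset.range (N + 1), (2 * (c (t + 1) - c t))
        = 2 * (c (N + 1) - c 0) := by
      rw [← Finset.mul_sum, Finset.sum_range_sub c (N + 1)]
    have h3 : c (N + 1) - c 0 = (S N).trace := by
      show (Λ N).trace - (ε • (1 : Matrix (Fin m) (Fin m) ℝ)).trace = _
      rw [hΛdef N, Matrix.trace_add]
      ring
    rw [h2, h3] at h1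
    exact h1
  have hkeysum : 2 * η * ∑ t ∈ Finset.range (N + 1), ((G t)ᵀ * D t).trace
      = ∑ t ∈ Finset.range (N + 1), (φ t - ψ t)
        + η ^ 2 * ∑ t ∈ Finset.range (N + 1), q t := by
    rw [Finset.mul_sum, Finset.mul_sum, ← Finset.sum_add_distrib]
    exact Finset.sum_congr rfl fun t _ => key t
  have hSgoal : psdSqrt (∑ s ∈ Finset.range (N + 1), G s * (G s)ᵀ) = S N := rfl
  rw [hSgoal]
  have hStr : 0 ≤ (S N).trace := psd_trace_nonneg (hSpsd N)
  have h2η : (0:ℝ) < 2 * η := by linarith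
  have hnum : 2 * η * ∑ t ∈ Finset.range (N + 1), ((G t)ᵀ * D t).trace
      ≤ 3 * η ^ 2 * (S N).trace + ε * DF ^ 2 := by
    rw [hkeysum]
    nlinarith [hsumA, hsumQ, sq_nonneg η]
  have hfinal : ∑ t ∈ Finset.range (N + 1), ((G t)ᵀ * D t).trace
      ≤ (3 * η ^ 2 * (S N).trace + ε * DF ^ 2) / (2 * η) := by
    rw [le_div_iff₀ h2η]
    linarith
  have heq : (3 * η ^ 2 * (S N).trace + ε * DF ^ 2) / (2 * η)
      = 3 / 2 * η * (S N).trace + ε * DF ^ 2 / (2 * η) := by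
    field_simp
  rw [heq] at hfinal
  exact hfinal

lemma trace_mul_apply (A B : Matrix (Fin k) (Fin k) ℝ) :
    (A * B).trace = ∑ i, ∑ l, A i l * B l i := by
  simp [Matrix.trace, Matrix.diag, Matrix.mul_apply]

lemma integral_mul_condexp_eq {Ω : Type} {mΩ : MeasurableSpace Ω} {μ : Measure Ω}
    [IsProbabilityMeasure μ] {m' : MeasurableSpace Ω} (hm : m' ≤ mΩ)
    {d g : Ω → ℝ} (hd : StronglyMeasurable[m'] d) {c : ℝ}
    (hdb : ∀ᵐ ω ∂μ, ‖d ω‖ ≤ c) (hg : Integrable g μ) :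
    ∫ ω, d ω * (μ[g|m']) ω ∂μ = ∫ ω, d ω * g ω ∂μ := by
  have h1 := condExp_stronglyMeasurable_mul_of_bound hm hd hg c hdb
  have hdg : Integrable (fun ω => d ω * g ω) μ :=
    hg.bdd_mul ((hd.mono hm).aestronglyMeasurable) hdb
  calc ∫ ω, d ω * (μ[g|m']) ω ∂μ
      = ∫ ω, (μ[fun ω' => d ω' * g ω'|m']) ω ∂μ := by
        refine (integral_congr_ae ?_).symm
        exact h1
    _ = ∫ ω, d ω * g ω ∂μ := integral_condExp hm

end ASGO

/-- Corollary 2: there is an absolute constant `C` such that, under the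
setting of the ASGO nonsmooth convergence theorem (convex `f` with minimizer `W_*`,
stochastic subgradients `G_t` whose conditional expectation given the history is a
subgradient of `f` at `W_t`, updates `V_t = ∑_{s ≤ t} G_s G_sᵀ`, `Λ_t = V_t^{1/2} + ε I`,
`W_{t+1} = W_t - η Λ_t⁻¹ G_t` with `η = D_op`, and `‖W_t - W_*‖_op ≤ D_op`,
`‖W_t - W_*‖_F ≤ D_F` almost surely), if in addition there is a symmetric positive
definite `Q` with `E[G_t G_tᵀ] ⪯ Q²` for every `t`, then
`(1/T) ∑_{t<T} E[f(W_t)] - f(W_*) ≤ C (‖Q‖_* D_op / √T + ε D_F² / (D_op T))`. -/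
theorem stmt1 :
    ∃ C : ℝ, 0 < C ∧
      ∀ (m n T : ℕ), 0 < T →
      ∀ (Ω : Type) (mΩ : MeasurableSpace Ω) (μ : Measure Ω), IsProbabilityMeasure μ →
      ∀ (ℱ : Filtration ℕ mΩ)
        (f : Matrix (Fin m) (Fin n) ℝ → ℝ), ConvexOn ℝ Set.univ f →
      ∀ (Wstar : Matrix (Fin m) (Fin n) ℝ), (∀ Y, f Wstar ≤ f Y) →
      ∀ (ε Dop DF : ℝ), 0 < ε → 0 < Dop →
      ∀ (W G : ℕ → Ω → Matrix (Fin m) (Fin n) ℝ)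
        (Λ : ℕ → Ω → Matrix (Fin m) (Fin m) ℝ),
      (∀ t i j, Measurable[ℱ t] fun ω => W t ω i j) →
      (∀ t i j, Measurable fun ω => G t ω i j) →
      (∀ t i j, Integrable (fun ω => G t ω i j) μ) →
      (∀ t, t < T → ∀ᵐ ω ∂μ, ∀ Y : Matrix (Fin m) (Fin n) ℝ,
        f (W t ω) +
          ((Matrix.of fun i j => (μ[fun ω' => G t ω' i j | ℱ t]) ω)ᵀ * (Y - W t ω)).trace
        ≤ f Y) →
      (∀ t ω, Λ t ω =
        psdSqrt (∑ s ∈ Finset.range (t + 1), G s ω * (G s ω)ᵀ) +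
          ε • (1 : Matrix (Fin m) (Fin m) ℝ)) →
      (∀ t ω, W (t + 1) ω = W t ω - Dop • ((Λ t ω)⁻¹ * G t ω)) →
      (∀ t, t < T → ∀ᵐ ω ∂μ, matSpectralNorm (W t ω - Wstar) ≤ Dop) →
      (∀ t, t < T → ∀ᵐ ω ∂μ, frobeniusNorm (W t ω - Wstar) ≤ DF) →
      (∀ t, t < T → Integrable (fun ω => f (W t ω)) μ) →
      Integrable
        (fun ω => nuclearNorm (psdSqrt (∑ t ∈ Finset.range T, G t ω * (G t ω)ᵀ))) μ →
      ∀ (Q : Matrix (Fin m) (Fin m) ℝ), Q.PosDef →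
      (∀ t i j, Integrable (fun ω => (G t ω * (G t ω)ᵀ) i j) μ) →
      (∀ t, t < T →
        (Q * Q - Matrix.of fun i j => ∫ ω, (G t ω * (G t ω)ᵀ) i j ∂μ).PosSemidef) →
      (1 / (T : ℝ)) * (∑ t ∈ Finset.range T, ∫ ω, f (W t ω) ∂μ) - f Wstar ≤
        C * (nuclearNorm Q * Dop / Real.sqrt T + ε * DF ^ 2 / (Dop * T)) := by
  classical
  refine ⟨2, by norm_num, ?_⟩
  intro m n T hT Ω mΩ μ hμ ℱ f hconv Wstar hmin ε Dop DF hε hDop W G Λ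
    hWmeas hGmeas hGint hsub hΛdef hupd hop hfr hfint hnuc Q hQ hGGint hQb
  haveI := hμ
  have hT0 : (0:ℝ) < (T:ℝ) := by exact_mod_cast hT
  have hsT : (0:ℝ) < Real.sqrt T := Real.sqrt_pos.mpr hT0
  have hTs : Real.sqrt T * Real.sqrt T = (T:ℝ) := Real.mul_self_sqrt hT0.le
  -- pathwise objects
  have hVTpsd : ∀ ω, (∑ t ∈ Finset.range T, G t ω * (G t ω)ᵀ).PosSemidef := fun ω =>
    ASGO.sum_posSemidef _ _ fun s _ => ASGO.posSemidef_mul_transpose_self (G s ω)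
  set R : Ω → ℝ := fun ω => (psdSqrt (∑ t ∈ Finset.range T, G t ω * (G t ω)ᵀ)).trace with hRdef
  have hR_int : Integrable R μ := by
    have he : (fun ω => nuclearNorm (psdSqrt (∑ t ∈ Finset.range T, G t ω * (G t ω)ᵀ))) = R := by
      funext ω
      exact ASGO.nuclearNorm_of_posSemidef (ASGO.psdSqrt_posSemidef (hVTpsd ω))
    rw [← he]
    exact hnuc
  -- entrywise deviation functions
  set d : ℕ → Fin m → Fin n → Ω → ℝ := fun t i j ω => W t ω i j - Wstar i j with hddef
  have hd_sm : ∀ t i j, StronglyMeasurable[ℱ t] (d t i j) := fun t i j =>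
    ((hWmeas t i j).sub measurable_const).stronglyMeasurable
  have hd_bdd : ∀ t, t < T → ∀ i j, ∀ᵐ ω ∂μ, ‖d t i j ω‖ ≤ DF := by
    intro t ht i j
    filter_upwards [hfr t ht] with ω hω
    rw [Real.norm_eq_abs]
    have h1 := ASGO.entry_abs_le_frobenius (W t ω - Wstar) i j
    rw [Matrix.sub_apply] at h1
    exact h1.trans hω
  have hint_dg : ∀ t, t < T → ∀ i j, Integrable (fun ω => d t i j ω * G t ω i j) μ :=
    fun t ht i j => (hGint t i j).bdd_mul
      (((hd_sm t i j).mono (ℱ.le t)).aestronglyMeasurable) (hd_bdd t ht i j)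
  have hint_dcond : ∀ t, t < T → ∀ i j,
      Integrable (fun ω => d t i j ω * (μ[fun ω' => G t ω' i j|ℱ t]) ω) μ :=
    fun t ht i j => integrable_condExp.bdd_mul
      (((hd_sm t i j).mono (ℱ.le t)).aestronglyMeasurable) (hd_bdd t ht i j)
  have hswap : ∀ t, t < T → ∀ i j,
      ∫ ω, d t i j ω * (μ[fun ω' => G t ω' i j|ℱ t]) ω ∂μ
        = ∫ ω, d t i j ω * G t ω i j ∂μ :=
    fun t ht i j => ASGO.integral_mul_condexp_eq (ℱ.le t) (hd_sm t i j)
      (hd_bdd t ht i j) (hGint t i j)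
  -- Step B : per-round expected bound
  have hstep1 : ∀ t, t < T →
      ∫ ω, f (W t ω) ∂μ ≤ f Wstar + ∑ i, ∑ j, ∫ ω, d t i j ω * G t ω i j ∂μ := by
    intro t ht
    have hae : ∀ᵐ ω ∂μ, f (W t ω)
        ≤ f Wstar + ∑ i, ∑ j, d t i j ω * (μ[fun ω' => G t ω' i j|ℱ t]) ω := by
      filter_upwards [hsub t ht] with ω hω
      have h1 := hω Wstar
      have h2 : ((Matrix.of fun i j => (μ[fun ω' => G t ω' i j|ℱ t]) ω)ᵀ
            * (Wstar - W t ω)).trace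
          = ∑ i, ∑ j, (μ[fun ω' => G t ω' i j|ℱ t]) ω * (Wstar i j - W t ω i j) := by
        rw [ASGO.trace_transpose_mul]
        apply Finset.sum_congr rfl
        intro i _
        apply Finset.sum_congr rfl
        intro j _
        rw [Matrix.of_apply, Matrix.sub_apply]
      have h3 : ∑ i, ∑ j, (μ[fun ω' => G t ω' i j|ℱ t]) ω * (Wstar i j - W t ω i j)
          = - ∑ i, ∑ j, d t i j ω * (μ[fun ω' => G t ω' i j|ℱ t]) ω := by
        rw [← Finset.sum_neg_distrib]
        apply Finset.sum_congr rfl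
        intro i _
        rw [← Finset.sum_neg_distrib]
        apply Finset.sum_congr rfl
        intro j _
        simp only [hddef]
        ring
      rw [h2, h3] at h1
      linarith
    have hintR : Integrable (fun ω =>
        f Wstar + ∑ i, ∑ j, d t i j ω * (μ[fun ω' => G t ω' i j|ℱ t]) ω) μ := by
      apply Integrable.add (integrable_const _)
      apply integrable_finset_sum
      intro i _
      apply integrable_finset_sum
      intro j _
      exact hint_dcond t ht i j
    have h4 := integral_mono_ae (hfint t ht) hintR hae
    rw [integral_add (integrable_const _) (by
      apply integrable_finset_sum
      intro i _
      apply integrable_finset_sum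
      intro j _
      exact hint_dcond t ht i j), integral_const] at h4
    simp only [probReal_univ, ENNReal.toReal_one, smul_eq_mul, one_mul] at h4
    rw [integral_finset_sum _ (fun i _ => by
      apply integrable_finset_sum
      intro j _
      exact hint_dcond t ht i j)] at h4
    calc ∫ ω, f (W t ω) ∂μ
        ≤ f Wstar + ∑ i, ∫ ω, (∑ j, d t i j ω * (μ[fun ω' => G t ω' i j|ℱ t]) ω) ∂μ := h4
      _ = f Wstar + ∑ i, ∑ j, ∫ ω, d t i j ω * G t ω i j ∂μ := by
          congr 1
          apply Finset.sum_congr rfl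
          intro i _
          rw [integral_finset_sum _ (fun j _ => hint_dcond t ht i j)]
          exact Finset.sum_congr rfl fun j _ => hswap t ht i j
  -- Step C : sum over rounds
  have hintSum : Integrable (fun ω => ∑ t ∈ Finset.range T, ∑ i, ∑ j,
      d t i j ω * G t ω i j) μ := by
    apply integrable_finset_sum
    intro t htmem
    apply integrable_finset_sum
    intro i _
    apply integrable_finset_sum
    intro j _
    exact hint_dg t (Finset.mem_range.mp htmem) i j
  have hsum1 : ∑ t ∈ Finset.range T, ∫ ω, f (W t ω) ∂μ
      ≤ (T:ℝ) * f Wstar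
        + ∫ ω, (∑ t ∈ Finset.range T, ∑ i, ∑ j, d t i j ω * G t ω i j) ∂μ := by
    have h1 : ∑ t ∈ Finset.range T, ∫ ω, f (W t ω) ∂μ
        ≤ ∑ t ∈ Finset.range T,
            (f Wstar + ∑ i, ∑ j, ∫ ω, d t i j ω * G t ω i j ∂μ) :=
      Finset.sum_le_sum fun t htmem => hstep1 t (Finset.mem_range.mp htmem)
    have h2 : ∑ t ∈ Finset.range T,
          (f Wstar + ∑ i, ∑ j, ∫ ω, d t i j ω * G t ω i j ∂μ)
        = (T:ℝ) * f Wstar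
          + ∑ t ∈ Finset.range T, ∑ i, ∑ j, ∫ ω, d t i j ω * G t ω i j ∂μ := by
      rw [Finset.sum_add_distrib, Finset.sum_const, Finset.card_range, nsmul_eq_mul]
    have h3 : ∑ t ∈ Finset.range T, ∑ i, ∑ j, ∫ ω, d t i j ω * G t ω i j ∂μ
        = ∫ ω, (∑ t ∈ Finset.range T, ∑ i, ∑ j, d t i j ω * G t ω i j) ∂μ := by
      rw [integral_finset_sum _ (fun t htmem => by
        apply integrable_finset_sum
        intro i _
        apply integrable_finset_sum
        intro j _
        exact hint_dg t (Finset.mem_range.mp htmem) i j)]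
      apply Finset.sum_congr rfl
      intro t htmem
      have ht' := Finset.mem_range.mp htmem
      rw [integral_finset_sum _ (fun i _ =>
        integrable_finset_sum _ (fun j _ => hint_dg t ht' i j))]
      apply Finset.sum_congr rfl
      intro i _
      rw [integral_finset_sum _ (fun j _ => hint_dg t ht' i j)]
    rw [h2, h3] at h1
    exact h1
  -- Step D : pathwise bound a.e.
  have hae_all : ∀ᵐ ω ∂μ, ∀ t, t < T → matSpectralNorm (W t ω - Wstar) ≤ Dop
      ∧ frobeniusNorm (W t ω - Wstar) ≤ DF := by
    rw [MeasureTheory.ae_all_iff]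
    intro t
    by_cases ht : t < T
    · filter_upwards [hop t ht, hfr t ht] with ω h1 h2
      exact fun _ => ⟨h1, h2⟩
    · exact ae_of_all _ fun ω h => absurd h ht
  have hpath : ∀ᵐ ω ∂μ, (∑ t ∈ Finset.range T, ∑ i, ∑ j, d t i j ω * G t ω i j)
      ≤ 3/2 * Dop * R ω + ε * DF^2/(2*Dop) := by
    filter_upwards [hae_all] with ω hω
    have hrec : ∀ t, W (t+1) ω - Wstar = (W t ω - Wstar) - Dop • ((Λ t ω)⁻¹ * G t ω) := by
      intro t
      rw [hupd t ω]
      abel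
    have hp := ASGO.pathwise hT hε hDop (fun t => G t ω) (fun t => W t ω - Wstar)
      (fun t => Λ t ω) (fun t => hΛdef t ω) hrec
      (fun t ht => (hω t ht).1) (fun t ht => (hω t ht).2)
    have heq : ∑ t ∈ Finset.range T, ((G t ω)ᵀ * (W t ω - Wstar)).trace
        = ∑ t ∈ Finset.range T, ∑ i, ∑ j, d t i j ω * G t ω i j := by
      apply Finset.sum_congr rfl
      intro t _
      rw [ASGO.trace_transpose_mul]
      apply Finset.sum_congr rfl
      intro i _
      apply Finset.sum_congr rfl
      intro j _
      rw [Matrix.sub_apply]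
      simp only [hddef]
      ring
    rw [heq] at hp
    simp only [hRdef]
    exact hp
  -- Step E : integrate the pathwise bound
  have hintRHS : Integrable (fun ω => 3/2 * Dop * R ω + ε * DF^2/(2*Dop)) μ :=
    (hR_int.const_mul _).add (integrable_const _)
  have hE : ∫ ω, (∑ t ∈ Finset.range T, ∑ i, ∑ j, d t i j ω * G t ω i j) ∂μ
      ≤ 3/2 * Dop * (∫ ω, R ω ∂μ) + ε * DF^2/(2*Dop) := by
    have h1 := integral_mono_ae hintSum hintRHS hpath
    rw [integral_add (hR_int.const_mul _) (integrable_const _), integral_const_mul,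
      integral_const] at h1
    simpa [measure_univ] using h1
  -- Step F : bound the expected trace of the square root
  set M : Matrix (Fin m) (Fin m) ℝ := Real.sqrt T • Q with hMdef
  have hM : M.PosDef := ASGO.smul_posDef hQ hsT
  have hQdet : IsUnit Q.det := hQ.det_pos.ne'.isUnit
  have hMinv : M⁻¹ = (Real.sqrt T)⁻¹ • Q⁻¹ := by
    apply Matrix.inv_eq_right_inv
    rw [hMdef, Matrix.smul_mul, Matrix.mul_smul, smul_smul, Matrix.mul_nonsing_inv _ hQdet,
      mul_inv_cancel₀ hsT.ne', one_smul]
  have hRle : ∀ ω, R ω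
      ≤ ((M⁻¹ * (∑ t ∈ Finset.range T, G t ω * (G t ω)ᵀ)).trace + M.trace)/2 := fun ω => by
    simp only [hRdef]
    exact ASGO.trace_psdSqrt_le_variational (hVTpsd ω) hM
  have hVint : ∀ l i, Integrable
      (fun ω => (∑ t ∈ Finset.range T, G t ω * (G t ω)ᵀ) l i) μ := by
    intro l i
    have he : (fun ω => (∑ t ∈ Finset.range T, G t ω * (G t ω)ᵀ) l i)
        = fun ω => ∑ t ∈ Finset.range T, (G t ω * (G t ω)ᵀ) l i := by
      funext ω
      rw [Matrix.sum_apply]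
    rw [he]
    exact integrable_finset_sum _ fun t _ => hGGint t l i
  set EV : Matrix (Fin m) (Fin m) ℝ :=
    Matrix.of (fun i j => ∑ t ∈ Finset.range T, ∫ ω, (G t ω * (G t ω)ᵀ) i j ∂μ) with hEVdef
  have hEVentry : ∀ l i,
      ∫ ω, (∑ t ∈ Finset.range T, G t ω * (G t ω)ᵀ) l i ∂μ = EV l i := by
    intro l i
    have he : (fun ω => (∑ t ∈ Finset.range T, G t ω * (G t ω)ᵀ) l i)
        = fun ω => ∑ t ∈ Finset.range T, (G t ω * (G t ω)ᵀ) l i := by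
      funext ω
      rw [Matrix.sum_apply]
    rw [he, integral_finset_sum _ (fun t _ => hGGint t l i)]
    simp only [hEVdef, Matrix.of_apply]
  have hRint2 : Integrable (fun ω =>
      ((M⁻¹ * (∑ t ∈ Finset.range T, G t ω * (G t ω)ᵀ)).trace + M.trace)/2) μ := by
    apply Integrable.div_const
    apply Integrable.add _ (integrable_const _)
    have he : (fun ω => (M⁻¹ * (∑ t ∈ Finset.range T, G t ω * (G t ω)ᵀ)).trace)
        = fun ω => ∑ i, ∑ l, M⁻¹ i l * (∑ t ∈ Finset.range T, G t ω * (G t ω)ᵀ) l i := by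
      funext ω
      rw [ASGO.trace_mul_apply]
    rw [he]
    exact integrable_finset_sum _ fun i _ =>
      integrable_finset_sum _ fun l _ => (hVint l i).const_mul _
  have hF1 : ∫ ω, R ω ∂μ ≤ ((M⁻¹ * EV).trace + M.trace)/2 := by
    have h1 := integral_mono_ae hR_int hRint2 (ae_of_all _ hRle)
    have h2 : ∫ ω, ((M⁻¹ * (∑ t ∈ Finset.range T, G t ω * (G t ω)ᵀ)).trace + M.trace)/2 ∂μ
        = ((M⁻¹ * EV).trace + M.trace)/2 := by
      rw [integral_div]
      congr 1
      rw [integral_add _ (integrable_const _)]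
      · congr 1
        · have he : (fun ω => (M⁻¹ * (∑ t ∈ Finset.range T, G t ω * (G t ω)ᵀ)).trace)
              = fun ω => ∑ i, ∑ l, M⁻¹ i l * (∑ t ∈ Finset.range T, G t ω * (G t ω)ᵀ) l i := by
            funext ω
            rw [ASGO.trace_mul_apply]
          rw [he, integral_finset_sum _ (fun i _ =>
            integrable_finset_sum _ fun l _ => (hVint l i).const_mul (M⁻¹ i l))]
          rw [ASGO.trace_mul_apply]
          apply Finset.sum_congr rfl
          intro i _
          rw [integral_finset_sum _ (fun l _ => (hVint l i).const_mul (M⁻¹ i l))]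
          apply Finset.sum_congr rfl
          intro l _
          rw [integral_const_mul, hEVentry l i]
        · simp [measure_univ]
      · have he : (fun ω => (M⁻¹ * (∑ t ∈ Finset.range T, G t ω * (G t ω)ᵀ)).trace)
            = fun ω => ∑ i, ∑ l, M⁻¹ i l * (∑ t ∈ Finset.range T, G t ω * (G t ω)ᵀ) l i := by
          funext ω
          rw [ASGO.trace_mul_apply]
        rw [he]
        exact integrable_finset_sum _ fun i _ =>
          integrable_finset_sum _ fun l _ => (hVint l i).const_mul _
    rw [h2] at h1
    exact h1
  have hEVle : (M⁻¹ * EV).trace ≤ (M⁻¹ * ((T:ℝ) • (Q * Q))).trace := by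
    apply ASGO.trace_mul_mono hM.inv.posSemidef
    have hdecomp : (T:ℝ) • (Q * Q) - EV
        = ∑ t ∈ Finset.range T,
            (Q * Q - Matrix.of (fun i j => ∫ ω, (G t ω * (G t ω)ᵀ) i j ∂μ)) := by
      rw [Finset.sum_sub_distrib, Finset.sum_const, Finset.card_range]
      congr 1
      · rw [← Nat.cast_smul_eq_nsmul ℝ]
      · ext i j
        simp [hEVdef, Matrix.sum_apply]
    rw [hdecomp]
    exact ASGO.sum_posSemidef _ _ fun t htmem => hQb t (Finset.mem_range.mp htmem)
  have htrM : M.trace = Real.sqrt T * Q.trace := by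
    rw [hMdef, Matrix.trace_smul, smul_eq_mul]
  have htrMQQ : (M⁻¹ * ((T:ℝ) • (Q * Q))).trace = Real.sqrt T * Q.trace := by
    rw [Matrix.mul_smul, Matrix.trace_smul, hMinv, Matrix.smul_mul, Matrix.trace_smul]
    have hq3 : Q⁻¹ * (Q * Q) = Q := by
      rw [← Matrix.mul_assoc, Matrix.nonsing_inv_mul _ hQdet, Matrix.one_mul]
    rw [hq3]
    simp only [smul_eq_mul]
    have haux : ∀ s : ℝ, s ≠ 0 → (s * s) * (s⁻¹ * Q.trace) = s * Q.trace := by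
      intro s hs
      field_simp
    have haux' := haux (Real.sqrt (T:ℕ)) hsT.ne'
    rw [hTs] at haux'
    exact haux'
  have hF : ∫ ω, R ω ∂μ ≤ Real.sqrt T * Q.trace := by
    have h5 : (M⁻¹ * EV).trace ≤ Real.sqrt T * Q.trace := htrMQQ ▸ hEVle
    linarith [hF1, h5, htrM.le, htrM.ge]
  -- Step G : final arithmetic
  have htrQ : 0 ≤ Q.trace := ASGO.psd_trace_nonneg hQ.posSemidef
  have hnucQ : nuclearNorm Q = Q.trace := ASGO.nuclearNorm_of_posSemidef hQ.posSemidef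
  have hfinal1 : ∑ t ∈ Finset.range T, ∫ ω, f (W t ω) ∂μ
      ≤ (T:ℝ) * f Wstar + (3/2 * Dop * (Real.sqrt T * Q.trace) + ε * DF^2/(2*Dop)) := by
    nlinarith [hsum1, hE, hF, hDop.le]
  rw [hnucQ]
  have ha : 0 ≤ Q.trace * Dop / Real.sqrt T := by positivity
  have hb : 0 ≤ ε * DF^2 / (Dop * (T:ℝ)) := by positivity
  have hkey : 1/(T:ℝ) * (∑ t ∈ Finset.range T, ∫ ω, f (W t ω) ∂μ) - f Wstar
      ≤ 3/2 * (Q.trace * Dop / Real.sqrt T) + 1/2 * (ε * DF^2/(Dop*(T:ℝ))) := by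
    have h1 : 1/(T:ℝ) * (∑ t ∈ Finset.range T, ∫ ω, f (W t ω) ∂μ)
        ≤ 1/(T:ℝ) * ((T:ℝ) * f Wstar
          + (3/2 * Dop * (Real.sqrt T * Q.trace) + ε * DF^2/(2*Dop))) :=
      mul_le_mul_of_nonneg_left hfinal1 (by positivity)
    have h2 : 1/(T:ℝ) * ((T:ℝ) * f Wstar
          + (3/2 * Dop * (Real.sqrt T * Q.trace) + ε * DF^2/(2*Dop)))
        = f Wstar + (3/2 * (Q.trace * Dop / Real.sqrt T) + 1/2 * (ε * DF^2/(Dop*(T:ℝ)))) := by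
      have haux : ∀ s : ℝ, s ≠ 0 → 1/(s*s) * ((s*s) * f Wstar
            + (3/2 * Dop * (s * Q.trace) + ε * DF^2/(2*Dop)))
          = f Wstar + (3/2 * (Q.trace * Dop / s) + 1/2 * (ε * DF^2/(Dop*(s*s)))) := by
        intro s hs
        field_simp
      have haux' := haux (Real.sqrt (T:ℕ)) hsT.ne'
      rw [hTs] at haux'
      exact haux'
    rw [h2] at h1
    linarith
  linarith [hkey, ha, hb]
end

section
/- Let Λ', Λ ∈ R^{m×m} be symmetric positive definite matrices and G ∈ R^{m×n} a matrix such that Λ² = Λ'² + G Gᵀ. Then tr(Gᵀ Λ^{-1} G) ≤ 2 tr(Λ - Λ'). -/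
open Matrix

lemma trace_nonneg_of_posSemidef {k : ℕ} {P : Matrix (Fin k) (Fin k) ℝ}
    (hP : P.PosSemidef) : 0 ≤ P.trace := by
  rw [trace]
  apply Finset.sum_nonneg
  intro i _
  exact hP.diag_nonneg

/-- if `Λ', Λ ∈ ℝ^{m×m}` are symmetric positive definite and
`G ∈ ℝ^{m×n}` satisfies `Λ² = Λ'² + G Gᵀ`, then `tr(Gᵀ Λ⁻¹ G) ≤ 2 tr(Λ - Λ')`. -/
theorem stmt12 (m n : ℕ) (Λ' Λ : Matrix (Fin m) (Fin m) ℝ)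
    (hΛ' : Λ'.PosDef) (hΛ : Λ.PosDef)
    (G : Matrix (Fin m) (Fin n) ℝ) (h : Λ * Λ = Λ' * Λ' + G * Gᵀ) :
    (Gᵀ * Λ⁻¹ * G).trace ≤ 2 * (Λ - Λ').trace := by
  have hdet : IsUnit Λ.det := hΛ.det_pos.ne'.isUnit
  have hinv : Λ⁻¹ * Λ = 1 := nonsing_inv_mul Λ hdet
  have hinv' : Λ * Λ⁻¹ = 1 := mul_nonsing_inv Λ hdet
  have hherm : (Λ - Λ')ᴴ = Λ - Λ' := (hΛ.isHermitian.sub hΛ'.isHermitian).eq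
  have h0 : 0 ≤ ((Λ - Λ') * Λ⁻¹ * (Λ - Λ')ᴴ).trace :=
    trace_nonneg_of_posSemidef (hΛ.inv.posSemidef.mul_mul_conjTranspose_same _)
  rw [hherm] at h0
  have hGG : G * Gᵀ = Λ * Λ - Λ' * Λ' := by rw [h]; abel
  have t1 : (Gᵀ * Λ⁻¹ * G).trace = Λ.trace - (Λ' * Λ' * Λ⁻¹).trace := by
    rw [trace_mul_cycle, hGG, sub_mul, trace_sub, mul_assoc, hinv', mul_one]
  have t2 : ((Λ - Λ') * Λ⁻¹ * (Λ - Λ')).trace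
      = Λ.trace - 2 * Λ'.trace + (Λ' * Λ' * Λ⁻¹).trace := by
    have e : (Λ - Λ') * Λ⁻¹ * (Λ - Λ')
        = Λ * Λ⁻¹ * Λ - Λ * Λ⁻¹ * Λ' - Λ' * (Λ⁻¹ * Λ) + Λ' * Λ⁻¹ * Λ' := by
      noncomm_ring
    rw [e, hinv, hinv']
    simp only [Matrix.one_mul, Matrix.mul_one, trace_add, trace_sub,
      trace_mul_cycle Λ' Λ⁻¹ Λ']
    ring
  rw [t2] at h0
  rw [t1, trace_sub]
  linarith
end
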